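/- If E₁ and E₂ are Cantor-type sets contained in closed intervals A and B respectively, with thickness τ(E₁) ≥ 1 and τ(E₂) ≥ 1, and 1/3 ≤ |A|/|B| ≤ 3, then the sumset E₁ + E₂ equals the interval A + B. -/
import Mathlib


open Pointwise

/-- Left endpoint of the largest closed interval, inside the stage obtained after
removing the gaps `(g i, h i)` for `i < k` from `[lo, hi]`, that contains the
gap `(g k, h k)`. -/
noncomputable def gapLeft (lo : ℝ) (g h : ℕ → ℝ) (k : ℕ) : ℝ :=
  sSup (insert lo {x : ℝ | ∃ i < k, h i = x ∧ x ≤ g k})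

/-- Right endpoint of the largest closed interval, inside the stage obtained after
removing the gaps `(g i, h i)` for `i < k` from `[lo, hi]`, that contains the
gap `(g k, h k)`. -/
noncomputable def gapRight (hi : ℝ) (g h : ℕ → ℝ) (k : ℕ) : ℝ :=
  sInf (insert hi {x : ℝ | ∃ i < k, g i = x ∧ h k ≤ x})

/-- The Cantor-type set on `[lo, hi]` obtained by removing the countable family
of open gaps `(g k, h k)`. -/
def gapCantorSet (lo hi : ℝ) (g h : ℕ → ℝ) : Set ℝ :=
  Set.Icc lo hi \ ⋃ k, Set.Ioo (g k) (h k)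

/-- The thickness of the Cantor-type set on `[lo, hi]` with gaps `(g k, h k)` is
at least `τ`: each (nonempty) gap is at most `1/τ` times the shorter of the two
bridges flanking it at the stage where it is removed. -/
def ThickAtLeast (lo hi : ℝ) (g h : ℕ → ℝ) (τ : ℝ) : Prop :=
  ∀ k, g k < h k →
    τ * (h k - g k) ≤ min (g k - gapLeft lo g h k) (gapRight hi g h k - h k)

namespace HallAux

lemma gapLeft_bddAbove (lo : ℝ) (g h : ℕ → ℝ) (k : ℕ) :
    BddAbove (insert lo {x : ℝ | ∃ i < k, h i = x ∧ x ≤ g k}) := by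
  refine ⟨max lo (g k), ?_⟩
  rintro x hx
  rcases Set.mem_insert_iff.1 hx with rfl | ⟨i, _, rfl, hle⟩
  · exact le_max_left _ _
  · exact le_trans hle (le_max_right _ _)

lemma gapRight_bddBelow (hi : ℝ) (g h : ℕ → ℝ) (k : ℕ) :
    BddBelow (insert hi {x : ℝ | ∃ i < k, g i = x ∧ h k ≤ x}) := by
  refine ⟨min hi (h k), ?_⟩
  rintro x hx
  rcases Set.mem_insert_iff.1 hx with rfl | ⟨i, _, rfl, hle⟩
  · exact min_le_left _ _
  · exact le_trans (min_le_right _ _) hle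

lemma lo_le_gapLeft (lo : ℝ) (g h : ℕ → ℝ) (k : ℕ) : lo ≤ gapLeft lo g h k :=
  le_csSup (gapLeft_bddAbove lo g h k) (Set.mem_insert _ _)

lemma gapRight_le_hi (hi : ℝ) (g h : ℕ → ℝ) (k : ℕ) : gapRight hi g h k ≤ hi :=
  csInf_le (gapRight_bddBelow hi g h k) (Set.mem_insert _ _)

lemma thick_both {lo hi : ℝ} {g h : ℕ → ℝ} (hthick : ThickAtLeast lo hi g h 1)
    {k : ℕ} (hk : g k < h k) :
    h k - g k ≤ g k - gapLeft lo g h k ∧ h k - g k ≤ gapRight hi g h k - h k := by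
  have := hthick k hk
  rw [one_mul, le_min_iff] at this
  exact this

/-- 3 times any (nonempty) gap is at most the length of the base interval. -/
lemma size3 {lo hi : ℝ} {g h : ℕ → ℝ} (hthick : ThickAtLeast lo hi g h 1)
    {k : ℕ} (hk : g k < h k) : 3 * (h k - g k) ≤ hi - lo := by
  obtain ⟨h1, h2⟩ := thick_both hthick hk
  have h3 := lo_le_gapLeft lo g h k
  have h4 := gapRight_le_hi hi g h k
  linarith

lemma lo_le_g {lo hi : ℝ} {g h : ℕ → ℝ} {k : ℕ}
    (hsub : Set.Ioo (g k) (h k) ⊆ Set.Icc lo hi) (hk : g k < h k) : lo ≤ g k := by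
  by_contra hc
  push_neg at hc
  have hlt : g k < min (h k) lo := lt_min hk hc
  have hmem : (g k + min (h k) lo) / 2 ∈ Set.Ioo (g k) (h k) := by
    constructor
    · linarith
    · have := min_le_left (h k) lo
      linarith
  have := (hsub hmem).1
  have h2 := min_le_right (h k) lo
  linarith

lemma h_le_hi {lo hi : ℝ} {g h : ℕ → ℝ} {k : ℕ}
    (hsub : Set.Ioo (g k) (h k) ⊆ Set.Icc lo hi) (hk : g k < h k) : h k ≤ hi := by
  by_contra hc
  push_neg at hc
  have hlt : max (g k) hi < h k := max_lt hk hc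
  have hmem : (max (g k) hi + h k) / 2 ∈ Set.Ioo (g k) (h k) := by
    constructor
    · have := le_max_left (g k) hi
      linarith
    · linarith
  have := (hsub hmem).2
  have h2 := le_max_right (g k) hi
  linarith

/-- Flank bound on the left of gap `k`: if gap `j` (nonempty) lies to the left
and either `j < k` or gap `j` is strictly bigger, then the bridge between them
is at least the size of gap `k`. -/
lemma flank_left {lo hi : ℝ} {g h : ℕ → ℝ} (hthick : ThickAtLeast lo hi g h 1)
    {k j : ℕ} (hk : g k < h k) (hj : g j < h j) (hle : h j ≤ g k)
    (hord : j < k ∨ h k - g k < h j - g j) :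
    h k - g k ≤ g k - h j := by
  rcases lt_trichotomy j k with hlt | rfl | hgt
  · have h1 : h j ≤ gapLeft lo g h k :=
      le_csSup (gapLeft_bddAbove lo g h k) (Set.mem_insert_iff.2 (Or.inr ⟨j, hlt, rfl, hle⟩))
    have h2 := (thick_both hthick hk).1
    linarith
  · exact absurd hle (not_le.2 hk)
  · rcases hord with hlt | hsz
    · omega
    · have h1 : gapRight hi g h j ≤ g k :=
        csInf_le (gapRight_bddBelow hi g h j) (Set.mem_insert_iff.2 (Or.inr ⟨k, hgt, rfl, hle⟩))
      have h2 := (thick_both hthick hj).2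
      linarith

lemma flank_right {lo hi : ℝ} {g h : ℕ → ℝ} (hthick : ThickAtLeast lo hi g h 1)
    {k j : ℕ} (hk : g k < h k) (hj : g j < h j) (hle : h k ≤ g j)
    (hord : j < k ∨ h k - g k < h j - g j) :
    h k - g k ≤ g j - h k := by
  rcases lt_trichotomy j k with hlt | rfl | hgt
  · have h1 : gapRight hi g h k ≤ g j :=
      csInf_le (gapRight_bddBelow hi g h k) (Set.mem_insert_iff.2 (Or.inr ⟨j, hlt, rfl, hle⟩))
    have h2 := (thick_both hthick hk).2
    linarith
  · exact absurd hle (not_le.2 hk)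
  · rcases hord with hlt | hsz
    · omega
    · have h1 : h k ≤ gapLeft lo g h j :=
        le_csSup (gapLeft_bddAbove lo g h j) (Set.mem_insert_iff.2 (Or.inr ⟨k, hgt, rfl, hle⟩))
      have h2 := (thick_both hthick hj).1
      linarith

end HallAux

namespace HallAux

def stage (lo hi : ℝ) (g h : ℕ → ℝ) (F : Finset ℕ) : Set ℝ :=
  Set.Icc lo hi \ ⋃ k ∈ F, Set.Ioo (g k) (h k)

lemma mem_stage {lo hi : ℝ} {g h : ℕ → ℝ} {F : Finset ℕ} {x : ℝ} :
    x ∈ stage lo hi g h F ↔ x ∈ Set.Icc lo hi ∧ ∀ k ∈ F, x ∉ Set.Ioo (g k) (h k) := by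
  simp only [stage, Set.mem_diff, Set.mem_iUnion, not_exists]

lemma stage_anti {lo hi : ℝ} {g h : ℕ → ℝ} {F F' : Finset ℕ} (hFF : F ⊆ F') :
    stage lo hi g h F' ⊆ stage lo hi g h F := by
  intro x hx
  rw [mem_stage] at hx ⊢
  exact ⟨hx.1, fun k hk => hx.2 k (hFF hk)⟩

def QQ (t lo₁ hi₁ : ℝ) (g₁ h₁ : ℕ → ℝ) (F₁ : Finset ℕ)
    (lo₂ hi₂ : ℝ) (g₂ h₂ : ℕ → ℝ) (F₂ : Finset ℕ) : Prop :=
  ∃ a b c d : ℝ, a ≤ b ∧ c ≤ d ∧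
    Set.Icc a b ⊆ stage lo₁ hi₁ g₁ h₁ F₁ ∧
    Set.Icc c d ⊆ stage lo₂ hi₂ g₂ h₂ F₂ ∧
    (a = lo₁ ∨ ∃ j ∈ F₁, g₁ j < h₁ j ∧ h₁ j = a) ∧
    (b = hi₁ ∨ ∃ j ∈ F₁, g₁ j < h₁ j ∧ g₁ j = b) ∧
    (c = lo₂ ∨ ∃ j ∈ F₂, g₂ j < h₂ j ∧ h₂ j = c) ∧
    (d = hi₂ ∨ ∃ j ∈ F₂, g₂ j < h₂ j ∧ g₂ j = d) ∧
    a + c ≤ t ∧ t ≤ b + d ∧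
    (∀ j ∉ F₁, h₁ j - g₁ j ≤ d - c) ∧
    (∀ j ∉ F₂, h₂ j - g₂ j ≤ b - a)

lemma QQ.swap {t lo₁ hi₁ : ℝ} {g₁ h₁ : ℕ → ℝ} {F₁ : Finset ℕ}
    {lo₂ hi₂ : ℝ} {g₂ h₂ : ℕ → ℝ} {F₂ : Finset ℕ}
    (H : QQ t lo₁ hi₁ g₁ h₁ F₁ lo₂ hi₂ g₂ h₂ F₂) :
    QQ t lo₂ hi₂ g₂ h₂ F₂ lo₁ hi₁ g₁ h₁ F₁ := by
  obtain ⟨a, b, c, d, h1, h2, h3, h4, h5, h6, h7, h8, h9, h10, h11, h12⟩ := H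
  exact ⟨c, d, a, b, h2, h1, h4, h3, h7, h8, h5, h6, by linarith, by linarith, h12, h11⟩

lemma notin_of_notin_erase {F : Finset ℕ} {j k : ℕ} (hj : j ∉ F.erase k) (hne : j ≠ k) :
    j ∉ F := fun hmem => hj (Finset.mem_erase.2 ⟨hne, hmem⟩)

lemma QQ.peel_trivial {t lo₁ hi₁ : ℝ} {g₁ h₁ : ℕ → ℝ} {F₁ : Finset ℕ}
    {lo₂ hi₂ : ℝ} {g₂ h₂ : ℕ → ℝ} {F₂ : Finset ℕ} {k : ℕ}
    (hkF : k ∈ F₁) (hk : h₁ k ≤ g₁ k)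
    (H : QQ t lo₁ hi₁ g₁ h₁ (F₁.erase k) lo₂ hi₂ g₂ h₂ F₂) :
    QQ t lo₁ hi₁ g₁ h₁ F₁ lo₂ hi₂ g₂ h₂ F₂ := by
  obtain ⟨a, b, c, d, h1, h2, h3, h4, h5, h6, h7, h8, h9, h10, h11, h12⟩ := H
  refine ⟨a, b, c, d, h1, h2, ?_, h4, ?_, ?_, h7, h8, h9, h10,
    fun j hj => h11 j (fun hj' => hj (Finset.mem_of_mem_erase hj')), h12⟩
  · intro x hx
    have hx' := mem_stage.1 (h3 hx)
    refine mem_stage.2 ⟨hx'.1, fun i hiF => ?_⟩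
    by_cases hik : i = k
    · subst hik
      rw [Set.Ioo_eq_empty (not_lt.2 hk)]
      exact Set.notMem_empty x
    · exact hx'.2 i (Finset.mem_erase.2 ⟨hik, hiF⟩)
  · rcases h5 with h5 | ⟨j, hjF, hj⟩
    · exact Or.inl h5
    · exact Or.inr ⟨j, Finset.mem_of_mem_erase hjF, hj⟩
  · rcases h6 with h6 | ⟨j, hjF, hj⟩
    · exact Or.inl h6
    · exact Or.inr ⟨j, Finset.mem_of_mem_erase hjF, hj⟩

/-- The main peel step: remove a nonempty gap `k` from the first set's finset,
where `k` is minimal in size (with ties broken towards larger index). -/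
lemma QQ.peel {lo hi : ℝ} {g h : ℕ → ℝ}
    (hsub : ∀ k, Set.Ioo (g k) (h k) ⊆ Set.Icc lo hi)
    (hdisj : Pairwise (Function.onFun Disjoint fun k => Set.Ioo (g k) (h k)))
    (hthick : ThickAtLeast lo hi g h 1)
    {lo' hi' : ℝ} {g' h' : ℕ → ℝ} {t : ℝ} {F F' : Finset ℕ} {k : ℕ}
    (hkF : k ∈ F) (hk : g k < h k)
    (hord : ∀ j ∈ F.erase k, g j < h j → j < k ∨ h k - g k < h j - g j)
    (hmin' : ∀ j ∉ F', h' j - g' j ≤ h k - g k)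
    (H : QQ t lo hi g h (F.erase k) lo' hi' g' h' F') :
    QQ t lo hi g h F lo' hi' g' h' F' := by
  obtain ⟨a, b, c, d, hab, hcd, hI, hJ, ha, hb, hc, hd, htl, htr, hs1, hs2⟩ := H
  have hsk : (0:ℝ) < h k - g k := by linarith
  have hkd : h k - g k ≤ d - c := hs1 k (Finset.notMem_erase k F)
  by_cases hover : g k < b ∧ a < h k
  · -- the gap meets the bridge [a,b]; show it is inside and use flanks
    have hau : a ≤ g k := by
      by_contra hau
      push_neg at hau
      rcases ha with ha' | ⟨j, hjF, hj, hja⟩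
      · rw [ha'] at hau
        exact absurd hau (not_lt.2 (lo_le_g (hsub k) hk))
      · have hjk : j ≠ k := by
          intro e
          rw [e] at hja
          linarith [hover.2]
        have hmax : max (g j) (g k) < h j := by
          rw [hja]
          exact max_lt (by linarith [hja]) hau
        set x := (max (g j) (g k) + h j) / 2 with hx
        have hx1 : x ∈ Set.Ioo (g j) (h j) := by
          constructor
          · have := le_max_left (g j) (g k)
            simp only [hx]; linarith
          · simp only [hx]; linarith
        have hx2 : x ∈ Set.Ioo (g k) (h k) := by
          constructor
          · have := le_max_right (g j) (g k)
            simp only [hx]; linarith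
          · have : x < h j := by simp only [hx]; linarith
            rw [hja] at this
            linarith [hover.2]
        exact Set.disjoint_left.1 (hdisj hjk) hx1 hx2
    have hbv : h k ≤ b := by
      by_contra hbv
      push_neg at hbv
      rcases hb with hb' | ⟨j, hjF, hj, hjb⟩
      · rw [hb'] at hbv
        exact absurd hbv (not_lt.2 (h_le_hi (hsub k) hk))
      · have hjk : j ≠ k := by
          intro e
          rw [e] at hjb
          linarith [hover.1]
        have hmin : g j < min (h j) (h k) := by
          rw [hjb] at hj ⊢
          exact lt_min hj hbv
        set x := (g j + min (h j) (h k)) / 2 with hx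
        have hx1 : x ∈ Set.Ioo (g j) (h j) := by
          constructor
          · simp only [hx]; linarith
          · have := min_le_left (h j) (h k)
            simp only [hx]; linarith
        have hx2 : x ∈ Set.Ioo (g k) (h k) := by
          constructor
          · have : g k < g j := by rw [hjb]; exact hover.1
            simp only [hx]; linarith
          · have := min_le_right (h j) (h k)
            simp only [hx]; linarith
        exact Set.disjoint_left.1 (hdisj hjk) hx1 hx2
    have hflankL : h k - g k ≤ g k - a := by
      rcases ha with ha' | ⟨j, hjF, hj, hja⟩
      · rw [ha']
        have h1 := (thick_both hthick hk).1
        have h2 := lo_le_gapLeft lo g h k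
        linarith
      · rw [← hja]
        exact flank_left hthick hk hj (by rw [hja]; exact hau) (hord j hjF hj)
    have hflankR : h k - g k ≤ b - h k := by
      rcases hb with hb' | ⟨j, hjF, hj, hjb⟩
      · rw [hb']
        have h1 := (thick_both hthick hk).2
        have h2 := gapRight_le_hi hi g h k
        linarith
      · rw [← hjb]
        exact flank_right hthick hk hj (by rw [hjb]; exact hbv) (hord j hjF hj)
    by_cases hts : t ≤ g k + d
    · -- keep left piece [a, g k]
      refine ⟨a, g k, c, d, by linarith, hcd, ?_, hJ, ?_, Or.inr ⟨k, hkF, hk, rfl⟩,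
        hc, hd, htl, hts, fun j hj => hs1 j (fun hj' => hj (Finset.mem_of_mem_erase hj')),
        fun j hj => le_trans (hmin' j hj) (by linarith)⟩
      · intro x hx
        have hx' : x ∈ Set.Icc a b := ⟨hx.1, le_trans hx.2 (by linarith)⟩
        have hm := mem_stage.1 (hI hx')
        refine mem_stage.2 ⟨hm.1, fun i hiF => ?_⟩
        by_cases hik : i = k
        · subst hik
          exact fun hmem => absurd hmem.1 (not_lt.2 hx.2)
        · exact hm.2 i (Finset.mem_erase.2 ⟨hik, hiF⟩)
      · rcases ha with h5 | ⟨j, hjF, hj⟩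
        · exact Or.inl h5
        · exact Or.inr ⟨j, Finset.mem_of_mem_erase hjF, hj⟩
    · -- keep right piece [h k, b]
      push_neg at hts
      have hts2 : h k + c ≤ t := by
        by_contra hcon
        push_neg at hcon
        linarith
      refine ⟨h k, b, c, d, by linarith, hcd, ?_, hJ, Or.inr ⟨k, hkF, hk, rfl⟩, ?_,
        hc, hd, hts2, htr, fun j hj => hs1 j (fun hj' => hj (Finset.mem_of_mem_erase hj')),
        fun j hj => le_trans (hmin' j hj) (by linarith)⟩
      · intro x hx
        have hx' : x ∈ Set.Icc a b := ⟨le_trans (by linarith) hx.1, hx.2⟩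
        have hm := mem_stage.1 (hI hx')
        refine mem_stage.2 ⟨hm.1, fun i hiF => ?_⟩
        by_cases hik : i = k
        · subst hik
          exact fun hmem => absurd hmem.2 (not_lt.2 hx.1)
        · exact hm.2 i (Finset.mem_erase.2 ⟨hik, hiF⟩)
      · rcases hb with h6 | ⟨j, hjF, hj⟩
        · exact Or.inl h6
        · exact Or.inr ⟨j, Finset.mem_of_mem_erase hjF, hj⟩
  · -- the gap misses the bridge entirely
    refine ⟨a, b, c, d, hab, hcd, ?_, hJ, ?_, ?_, hc, hd, htl, htr,
      fun j hj => hs1 j (fun hj' => hj (Finset.mem_of_mem_erase hj')), hs2⟩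
    · intro x hx
      have hm := mem_stage.1 (hI hx)
      refine mem_stage.2 ⟨hm.1, fun i hiF => ?_⟩
      by_cases hik : i = k
      · subst hik
        intro hmem
        rcases not_and_or.1 hover with hcase | hcase
        · push_neg at hcase
          exact absurd hmem.1 (not_lt.2 (le_trans hx.2 hcase))
        · push_neg at hcase
          exact absurd hmem.2 (not_lt.2 (le_trans hcase hx.1))
      · exact hm.2 i (Finset.mem_erase.2 ⟨hik, hiF⟩)
    · rcases ha with h5 | ⟨j, hjF, hj⟩
      · exact Or.inl h5
      · exact Or.inr ⟨j, Finset.mem_of_mem_erase hjF, hj⟩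
    · rcases hb with h6 | ⟨j, hjF, hj⟩
      · exact Or.inl h6
      · exact Or.inr ⟨j, Finset.mem_of_mem_erase hjF, hj⟩

end HallAux
namespace HallAux

/-- Select an element of minimal value, with maximal index among ties. -/
lemma select_min (F : Finset ℕ) (s : ℕ → ℝ) (hF : F.Nonempty) :
    ∃ k ∈ F, (∀ j ∈ F, s k ≤ s j) ∧ (∀ j ∈ F, s j = s k → j ≤ k) := by
  set m := (F.image s).min' (hF.image s) with hm
  obtain ⟨k₀, hk₀F, hk₀⟩ := Finset.mem_image.1 ((F.image s).min'_mem (hF.image s))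
  have hKne : (F.filter (fun j => s j = m)).Nonempty :=
    ⟨k₀, Finset.mem_filter.2 ⟨hk₀F, hk₀⟩⟩
  set k := (F.filter (fun j => s j = m)).max' hKne with hk
  have hkmem := (F.filter (fun j => s j = m)).max'_mem hKne
  rw [Finset.mem_filter] at hkmem
  refine ⟨k, hkmem.1, fun j hj => ?_, fun j hj hje => ?_⟩
  · rw [hkmem.2]
    exact Finset.min'_le _ _ (Finset.mem_image_of_mem s hj)
  · exact Finset.le_max' _ j (Finset.mem_filter.2 ⟨hj, by rw [hje, hkmem.2]⟩)

/-- One branch of the induction step, peeling a minimal nonempty gap from side 1. -/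
lemma key_step {lo hi : ℝ} {g h : ℕ → ℝ}
    (hsub : ∀ k, Set.Ioo (g k) (h k) ⊆ Set.Icc lo hi)
    (hdisj : Pairwise (Function.onFun Disjoint fun k => Set.Ioo (g k) (h k)))
    (hthick : ThickAtLeast lo hi g h 1)
    {lo' hi' : ℝ} {g' h' : ℕ → ℝ} {t : ℝ} {n : ℕ} {F F' : Finset ℕ}
    (hcard : F.card + F'.card = n + 1)
    (H1 : ∀ i ∈ F, g i < h i →
      (∀ j ∉ F, h j - g j ≤ h i - g i) ∧ (∀ j ∉ F', h' j - g' j ≤ h i - g i))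
    (H2 : ∀ i ∈ F', g' i < h' i →
      (∀ j ∉ F, h j - g j ≤ h' i - g' i) ∧ (∀ j ∉ F', h' j - g' j ≤ h' i - g' i))
    {k : ℕ} (hkF : k ∈ F) (hk : g k < h k)
    (hminF : ∀ j ∈ F, h k - g k ≤ h j - g j)
    (hmaxF : ∀ j ∈ F, h j - g j = h k - g k → j ≤ k)
    (hcross : ∀ i ∈ F', g' i < h' i → h k - g k ≤ h' i - g' i)
    (IH : ∀ G G' : Finset ℕ, G.card + G'.card = n →
      (∀ i ∈ G, g i < h i →
        (∀ j ∉ G, h j - g j ≤ h i - g i) ∧ (∀ j ∉ G', h' j - g' j ≤ h i - g i)) →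
      (∀ i ∈ G', g' i < h' i →
        (∀ j ∉ G, h j - g j ≤ h' i - g' i) ∧ (∀ j ∉ G', h' j - g' j ≤ h' i - g' i)) →
      QQ t lo hi g h G lo' hi' g' h' G') :
    QQ t lo hi g h F lo' hi' g' h' F' := by
  have hord : ∀ j ∈ F.erase k, g j < h j → j < k ∨ h k - g k < h j - g j := by
    intro j hj _
    have hjF := Finset.mem_of_mem_erase hj
    have hne : j ≠ k := (Finset.mem_erase.1 hj).1
    rcases lt_or_eq_of_le (hminF j hjF) with hlt | heq
    · exact Or.inr hlt
    · exact Or.inl (lt_of_le_of_ne (hmaxF j hjF heq.symm) hne)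
  have hcd : (F.erase k).card + F'.card = n := by
    have h1 := Finset.card_erase_of_mem hkF
    have h2 : 0 < F.card := Finset.card_pos.2 ⟨k, hkF⟩
    omega
  have H1' : ∀ i ∈ F.erase k, g i < h i →
      (∀ j ∉ F.erase k, h j - g j ≤ h i - g i) ∧
      (∀ j ∉ F', h' j - g' j ≤ h i - g i) := by
    intro i hi hpos
    have hiF := Finset.mem_of_mem_erase hi
    refine ⟨fun j hj => ?_, (H1 i hiF hpos).2⟩
    by_cases hjk : j = k
    · subst hjk
      exact hminF i hiF
    · exact (H1 i hiF hpos).1 j (notin_of_notin_erase hj hjk)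
  have H2' : ∀ i ∈ F', g' i < h' i →
      (∀ j ∉ F.erase k, h j - g j ≤ h' i - g' i) ∧
      (∀ j ∉ F', h' j - g' j ≤ h' i - g' i) := by
    intro i hi hpos
    refine ⟨fun j hj => ?_, (H2 i hi hpos).2⟩
    by_cases hjk : j = k
    · subst hjk
      exact hcross i hi hpos
    · exact (H2 i hi hpos).1 j (notin_of_notin_erase hj hjk)
  exact QQ.peel hsub hdisj hthick hkF hk hord (H1 k hkF hk).2 (IH _ _ hcd H1' H2')

end HallAux
namespace HallAux

lemma key (lo₁ hi₁ lo₂ hi₂ : ℝ) (g₁ h₁ g₂ h₂ : ℕ → ℝ)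
    (hI₁ : lo₁ < hi₁) (hI₂ : lo₂ < hi₂)
    (hsub₁ : ∀ k, Set.Ioo (g₁ k) (h₁ k) ⊆ Set.Icc lo₁ hi₁)
    (hsub₂ : ∀ k, Set.Ioo (g₂ k) (h₂ k) ⊆ Set.Icc lo₂ hi₂)
    (hdisj₁ : Pairwise (Function.onFun Disjoint fun k => Set.Ioo (g₁ k) (h₁ k)))
    (hdisj₂ : Pairwise (Function.onFun Disjoint fun k => Set.Ioo (g₂ k) (h₂ k)))
    (hthick₁ : ThickAtLeast lo₁ hi₁ g₁ h₁ 1) (hthick₂ : ThickAtLeast lo₂ hi₂ g₂ h₂ 1)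
    (hratio₁ : 1 / 3 ≤ (hi₁ - lo₁) / (hi₂ - lo₂))
    (hratio₂ : (hi₁ - lo₁) / (hi₂ - lo₂) ≤ 3)
    (t : ℝ) (htl : lo₁ + lo₂ ≤ t) (htr : t ≤ hi₁ + hi₂) :
    ∀ (N : ℕ) (F₁ F₂ : Finset ℕ), F₁.card + F₂.card = N →
      (∀ i ∈ F₁, g₁ i < h₁ i →
        (∀ j ∉ F₁, h₁ j - g₁ j ≤ h₁ i - g₁ i) ∧ (∀ j ∉ F₂, h₂ j - g₂ j ≤ h₁ i - g₁ i)) →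
      (∀ i ∈ F₂, g₂ i < h₂ i →
        (∀ j ∉ F₁, h₁ j - g₁ j ≤ h₂ i - g₂ i) ∧ (∀ j ∉ F₂, h₂ j - g₂ j ≤ h₂ i - g₂ i)) →
      QQ t lo₁ hi₁ g₁ h₁ F₁ lo₂ hi₂ g₂ h₂ F₂ := by
  have hlen₂ : (0:ℝ) < hi₂ - lo₂ := by linarith
  have hr2 : hi₁ - lo₁ ≤ 3 * (hi₂ - lo₂) := (div_le_iff₀ hlen₂).1 hratio₂
  have hr1 : 1 / 3 * (hi₂ - lo₂) ≤ hi₁ - lo₁ := (le_div_iff₀ hlen₂).1 hratio₁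
  intro N
  induction N with
  | zero =>
    intro F₁ F₂ hcard _ _
    have hF₁ : F₁ = ∅ := Finset.card_eq_zero.1 (by omega)
    have hF₂ : F₂ = ∅ := Finset.card_eq_zero.1 (by omega)
    subst hF₁; subst hF₂
    refine ⟨lo₁, hi₁, lo₂, hi₂, le_of_lt hI₁, le_of_lt hI₂, ?_, ?_,
      Or.inl rfl, Or.inl rfl, Or.inl rfl, Or.inl rfl, htl, htr, ?_, ?_⟩
    · exact fun x hx => mem_stage.2 ⟨hx, fun k hk => absurd hk (Finset.notMem_empty k)⟩
    · exact fun x hx => mem_stage.2 ⟨hx, fun k hk => absurd hk (Finset.notMem_empty k)⟩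
    · intro j _
      by_cases hpos : g₁ j < h₁ j
      · have := size3 hthick₁ hpos
        linarith
      · push_neg at hpos
        linarith
    · intro j _
      by_cases hpos : g₂ j < h₂ j
      · have := size3 hthick₂ hpos
        linarith
      · push_neg at hpos
        linarith
  | succ n IH =>
    intro F₁ F₂ hcard H1 H2
    by_cases hA : ∃ k ∈ F₁, h₁ k ≤ g₁ k
    · obtain ⟨k, hkF, hk⟩ := hA
      have hce := Finset.card_erase_of_mem hkF
      have hcpos : 0 < F₁.card := Finset.card_pos.2 ⟨k, hkF⟩
      refine QQ.peel_trivial hkF hk (IH (F₁.erase k) F₂ (by omega) ?_ ?_)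
      · intro i hi hpos
        have hiF := Finset.mem_of_mem_erase hi
        refine ⟨fun j hj => ?_, (H1 i hiF hpos).2⟩
        by_cases hjk : j = k
        · subst hjk; linarith
        · exact (H1 i hiF hpos).1 j (notin_of_notin_erase hj hjk)
      · intro i hi hpos
        refine ⟨fun j hj => ?_, (H2 i hi hpos).2⟩
        by_cases hjk : j = k
        · subst hjk; linarith
        · exact (H2 i hi hpos).1 j (notin_of_notin_erase hj hjk)
    by_cases hB : ∃ k ∈ F₂, h₂ k ≤ g₂ k
    · obtain ⟨k, hkF, hk⟩ := hB
      have hce := Finset.card_erase_of_mem hkF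
      have hcpos : 0 < F₂.card := Finset.card_pos.2 ⟨k, hkF⟩
      refine QQ.swap (QQ.peel_trivial hkF hk
        (QQ.swap (IH F₁ (F₂.erase k) (by omega) ?_ ?_)))
      · intro i hi hpos
        refine ⟨(H1 i hi hpos).1, fun j hj => ?_⟩
        by_cases hjk : j = k
        · subst hjk; linarith
        · exact (H1 i hi hpos).2 j (notin_of_notin_erase hj hjk)
      · intro i hi hpos
        have hiF := Finset.mem_of_mem_erase hi
        refine ⟨(H2 i hiF hpos).1, fun j hj => ?_⟩
        by_cases hjk : j = k
        · subst hjk; linarith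
        · exact (H2 i hiF hpos).2 j (notin_of_notin_erase hj hjk)
    push_neg at hA hB
    have IH2 : ∀ G G' : Finset ℕ, G.card + G'.card = n →
        (∀ i ∈ G, g₂ i < h₂ i →
          (∀ j ∉ G, h₂ j - g₂ j ≤ h₂ i - g₂ i) ∧ (∀ j ∉ G', h₁ j - g₁ j ≤ h₂ i - g₂ i)) →
        (∀ i ∈ G', g₁ i < h₁ i →
          (∀ j ∉ G, h₂ j - g₂ j ≤ h₁ i - g₁ i) ∧ (∀ j ∉ G', h₁ j - g₁ j ≤ h₁ i - g₁ i)) →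
        QQ t lo₂ hi₂ g₂ h₂ G lo₁ hi₁ g₁ h₁ G' := by
      intro G G' hc HH1 HH2
      exact QQ.swap (IH G' G (by omega)
        (fun i hi hp => ⟨(HH2 i hi hp).2, (HH2 i hi hp).1⟩)
        (fun i hi hp => ⟨(HH1 i hi hp).2, (HH1 i hi hp).1⟩))
    rcases F₂.eq_empty_or_nonempty with hF₂e | hF₂ne
    · have hF₁ne : F₁.Nonempty := by
        refine Finset.card_pos.1 ?_
        rw [hF₂e] at hcard
        simp at hcard
        omega
      obtain ⟨k, hkF, hmin, hmax⟩ := select_min F₁ (fun j => h₁ j - g₁ j) hF₁ne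
      refine key_step hsub₁ hdisj₁ hthick₁ hcard H1 H2 hkF (hA k hkF) hmin hmax
        (fun i hi _ => absurd hi (by rw [hF₂e]; exact Finset.notMem_empty i)) IH
    rcases F₁.eq_empty_or_nonempty with hF₁e | hF₁ne
    · obtain ⟨k, hkF, hmin, hmax⟩ := select_min F₂ (fun j => h₂ j - g₂ j) hF₂ne
      refine QQ.swap (key_step hsub₂ hdisj₂ hthick₂ (by omega)
        (fun i hi hp => ⟨(H2 i hi hp).2, (H2 i hi hp).1⟩)
        (fun i hi hp => ⟨(H1 i hi hp).2, (H1 i hi hp).1⟩)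
        hkF (hB k hkF) hmin hmax
        (fun i hi _ => absurd hi (by rw [hF₁e]; exact Finset.notMem_empty i)) IH2)
    · obtain ⟨k₁, hk₁F, hmin₁, hmax₁⟩ := select_min F₁ (fun j => h₁ j - g₁ j) hF₁ne
      obtain ⟨k₂, hk₂F, hmin₂, hmax₂⟩ := select_min F₂ (fun j => h₂ j - g₂ j) hF₂ne
      by_cases hcmp : h₁ k₁ - g₁ k₁ ≤ h₂ k₂ - g₂ k₂
      · refine key_step hsub₁ hdisj₁ hthick₁ hcard H1 H2 hk₁F (hA k₁ hk₁F) hmin₁ hmax₁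
          (fun i hi _ => le_trans hcmp (hmin₂ i hi)) IH
      · refine QQ.swap (key_step hsub₂ hdisj₂ hthick₂ (by omega)
          (fun i hi hp => ⟨(H2 i hi hp).2, (H2 i hi hp).1⟩)
          (fun i hi hp => ⟨(H1 i hi hp).2, (H1 i hi hp).1⟩)
          hk₂F (hB k₂ hk₂F) hmin₂ hmax₂
          (fun i hi _ => le_trans (le_of_not_ge hcmp) (hmin₁ i hi)) IH2)

end HallAux
namespace HallAux

open MeasureTheory
open scoped ENNReal

lemma finite_bigGaps (lo hi : ℝ) (g h : ℕ → ℝ)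
    (hsub : ∀ k, Set.Ioo (g k) (h k) ⊆ Set.Icc lo hi)
    (hdisj : Pairwise (Function.onFun Disjoint fun k => Set.Ioo (g k) (h k)))
    {δ : ℝ} (hδ : 0 < δ) : {j : ℕ | δ ≤ h j - g j}.Finite := by
  by_contra hinf
  obtain ⟨F, hFsub, hFcard⟩ :=
    Set.Infinite.exists_subset_card_eq hinf (⌈(hi - lo) / δ⌉₊ + 1)
  have hFne : F.Nonempty := Finset.card_pos.1 (by omega)
  obtain ⟨j₀, hj₀⟩ := hFne
  have hj₀' : δ ≤ h j₀ - g j₀ := hFsub hj₀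
  have hlohi : lo ≤ hi := by
    have hmem : (g j₀ + h j₀) / 2 ∈ Set.Ioo (g j₀) (h j₀) :=
      ⟨by linarith, by linarith⟩
    have := hsub j₀ hmem
    exact le_trans this.1 this.2
  have hdisjF : (F : Set ℕ).PairwiseDisjoint (fun j => Set.Ioo (g j) (h j)) :=
    fun i _ j _ hij => hdisj hij
  have hsum : ∑ j ∈ F, volume (Set.Ioo (g j) (h j)) =
      volume (⋃ j ∈ F, Set.Ioo (g j) (h j)) :=
    (measure_biUnion_finset hdisjF (fun j _ => measurableSet_Ioo)).symm
  have hle : volume (⋃ j ∈ F, Set.Ioo (g j) (h j)) ≤ volume (Set.Icc lo hi) :=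
    measure_mono (Set.iUnion₂_subset fun j _ => hsub j)
  have hbig : (F.card : ℝ≥0∞) * ENNReal.ofReal δ ≤ ENNReal.ofReal (hi - lo) := by
    calc (F.card : ℝ≥0∞) * ENNReal.ofReal δ
        = ∑ _j ∈ F, ENNReal.ofReal δ := by rw [Finset.sum_const, nsmul_eq_mul]
      _ ≤ ∑ j ∈ F, volume (Set.Ioo (g j) (h j)) := by
          refine Finset.sum_le_sum fun j hj => ?_
          rw [Real.volume_Ioo]
          exact ENNReal.ofReal_le_ofReal (hFsub hj)
      _ = volume (⋃ j ∈ F, Set.Ioo (g j) (h j)) := hsum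
      _ ≤ volume (Set.Icc lo hi) := hle
      _ = ENNReal.ofReal (hi - lo) := Real.volume_Icc
  rw [show ((F.card : ℝ≥0∞)) = ENNReal.ofReal (F.card : ℝ) from
      (ENNReal.ofReal_natCast _).symm,
    ← ENNReal.ofReal_mul (by positivity)] at hbig
  rw [ENNReal.ofReal_le_ofReal_iff (by linarith)] at hbig
  have hceil := Nat.le_ceil ((hi - lo) / δ)
  have h2 : hi - lo ≤ (⌈(hi - lo) / δ⌉₊ : ℝ) * δ := by
    have hmul := mul_le_mul_of_nonneg_right hceil hδ.le
    rwa [div_mul_cancel₀ _ (ne_of_gt hδ)] at hmul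
  rw [hFcard] at hbig
  push_cast at hbig
  nlinarith

end HallAux
namespace HallAux

lemma stage_pair_nonempty (lo₁ hi₁ lo₂ hi₂ : ℝ) (g₁ h₁ g₂ h₂ : ℕ → ℝ)
    (hI₁ : lo₁ < hi₁) (hI₂ : lo₂ < hi₂)
    (hsub₁ : ∀ k, Set.Ioo (g₁ k) (h₁ k) ⊆ Set.Icc lo₁ hi₁)
    (hsub₂ : ∀ k, Set.Ioo (g₂ k) (h₂ k) ⊆ Set.Icc lo₂ hi₂)
    (hdisj₁ : Pairwise (Function.onFun Disjoint fun k => Set.Ioo (g₁ k) (h₁ k)))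
    (hdisj₂ : Pairwise (Function.onFun Disjoint fun k => Set.Ioo (g₂ k) (h₂ k)))
    (hthick₁ : ThickAtLeast lo₁ hi₁ g₁ h₁ 1) (hthick₂ : ThickAtLeast lo₂ hi₂ g₂ h₂ 1)
    (hratio₁ : 1 / 3 ≤ (hi₁ - lo₁) / (hi₂ - lo₂))
    (hratio₂ : (hi₁ - lo₁) / (hi₂ - lo₂) ≤ 3)
    (t : ℝ) (htl : lo₁ + lo₂ ≤ t) (htr : t ≤ hi₁ + hi₂) (n : ℕ) :
    ∃ x : ℝ, x ∈ stage lo₁ hi₁ g₁ h₁ (Finset.range n) ∧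
      t - x ∈ stage lo₂ hi₂ g₂ h₂ (Finset.range n) := by
  classical
  set P₁ := (Finset.range n).filter (fun j => 0 < h₁ j - g₁ j) with hP₁
  set P₂ := (Finset.range n).filter (fun j => 0 < h₂ j - g₂ j) with hP₂
  set S := insert (1:ℝ)
    ((P₁.image fun j => h₁ j - g₁ j) ∪ (P₂.image fun j => h₂ j - g₂ j)) with hS
  have hSne : S.Nonempty := ⟨1, Finset.mem_insert_self _ _⟩
  set μ := S.min' hSne with hμ
  have hμmem := S.min'_mem hSne
  have hμpos : 0 < μ := by
    rcases Finset.mem_insert.1 hμmem with he | hu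
    · rw [hμ, he]; norm_num
    · rcases Finset.mem_union.1 hu with hx | hx <;>
        obtain ⟨j, hj, hje⟩ := Finset.mem_image.1 hx
      · rw [hμ, ← hje]; exact (Finset.mem_filter.1 hj).2
      · rw [hμ, ← hje]; exact (Finset.mem_filter.1 hj).2
  have hμle₁ : ∀ j ∈ Finset.range n, 0 < h₁ j - g₁ j → μ ≤ h₁ j - g₁ j := by
    intro j hj hp
    exact Finset.min'_le _ _ (Finset.mem_insert.2 (Or.inr (Finset.mem_union_left _
      (Finset.mem_image_of_mem _ (Finset.mem_filter.2 ⟨hj, hp⟩)))))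
  have hμle₂ : ∀ j ∈ Finset.range n, 0 < h₂ j - g₂ j → μ ≤ h₂ j - g₂ j := by
    intro j hj hp
    exact Finset.min'_le _ _ (Finset.mem_insert.2 (Or.inr (Finset.mem_union_right _
      (Finset.mem_image_of_mem _ (Finset.mem_filter.2 ⟨hj, hp⟩)))))
  have hfin₁ := finite_bigGaps lo₁ hi₁ g₁ h₁ hsub₁ hdisj₁ hμpos
  have hfin₂ := finite_bigGaps lo₂ hi₂ g₂ h₂ hsub₂ hdisj₂ hμpos
  set F₁ := Finset.range n ∪ hfin₁.toFinset with hF₁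
  set F₂ := Finset.range n ∪ hfin₂.toFinset with hF₂
  have hrange₁ : Finset.range n ⊆ F₁ := Finset.subset_union_left
  have hrange₂ : Finset.range n ⊆ F₂ := Finset.subset_union_left
  have hout₁ : ∀ j ∉ F₁, h₁ j - g₁ j < μ := by
    intro j hj
    by_contra hc
    push_neg at hc
    exact hj (Finset.mem_union_right _ (hfin₁.mem_toFinset.2 hc))
  have hout₂ : ∀ j ∉ F₂, h₂ j - g₂ j < μ := by
    intro j hj
    by_contra hc
    push_neg at hc
    exact hj (Finset.mem_union_right _ (hfin₂.mem_toFinset.2 hc))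
  have hin₁ : ∀ i ∈ F₁, 0 < h₁ i - g₁ i → μ ≤ h₁ i - g₁ i := by
    intro i hi hp
    rcases Finset.mem_union.1 hi with hx | hx
    · exact hμle₁ i hx hp
    · exact hfin₁.mem_toFinset.1 hx
  have hin₂ : ∀ i ∈ F₂, 0 < h₂ i - g₂ i → μ ≤ h₂ i - g₂ i := by
    intro i hi hp
    rcases Finset.mem_union.1 hi with hx | hx
    · exact hμle₂ i hx hp
    · exact hfin₂.mem_toFinset.1 hx
  obtain ⟨a, b, c, d, hab, hcd, hIab, hJcd, _, _, _, _, htl', htr', _, _⟩ :=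
    key lo₁ hi₁ lo₂ hi₂ g₁ h₁ g₂ h₂ hI₁ hI₂ hsub₁ hsub₂ hdisj₁ hdisj₂ hthick₁ hthick₂
      hratio₁ hratio₂ t htl htr (F₁.card + F₂.card) F₁ F₂ rfl
      (fun i hi hp => ⟨fun j hj => (hout₁ j hj).le.trans (hin₁ i hi (by linarith)),
        fun j hj => (hout₂ j hj).le.trans (hin₁ i hi (by linarith))⟩)
      (fun i hi hp => ⟨fun j hj => (hout₁ j hj).le.trans (hin₂ i hi (by linarith)),
        fun j hj => (hout₂ j hj).le.trans (hin₂ i hi (by linarith))⟩)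
  have hsub₁' := (stage_anti (lo := lo₁) (hi := hi₁) (g := g₁) (h := h₁) hrange₁)
  have hsub₂' := (stage_anti (lo := lo₂) (hi := hi₂) (g := g₂) (h := h₂) hrange₂)
  rcases le_total (t - c) a with h1 | h1
  · refine ⟨a, hsub₁' (hIab ⟨le_refl a, hab⟩), hsub₂' (hJcd ⟨by linarith, by linarith⟩)⟩
  · rcases le_total (t - c) b with h2 | h2
    · refine ⟨t - c, hsub₁' (hIab ⟨h1, h2⟩), hsub₂' (hJcd ⟨by linarith, by linarith⟩)⟩
    · refine ⟨b, hsub₁' (hIab ⟨hab, le_refl b⟩), hsub₂' (hJcd ⟨by linarith, by linarith⟩)⟩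

end HallAux

/-- Hall's sumset theorem (Newhouse gap lemma): the sum of two Cantor-type sets of
thickness at least 1 whose base intervals have comparable lengths is the sum of
the base intervals. -/
theorem hall_sumset (lo₁ hi₁ lo₂ hi₂ : ℝ) (g₁ h₁ g₂ h₂ : ℕ → ℝ)
    (hI₁ : lo₁ < hi₁) (hI₂ : lo₂ < hi₂)
    (hgap₁ : ∀ k, g₁ k ≤ h₁ k) (hgap₂ : ∀ k, g₂ k ≤ h₂ k)
    (hsub₁ : ∀ k, Set.Ioo (g₁ k) (h₁ k) ⊆ Set.Icc lo₁ hi₁)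
    (hsub₂ : ∀ k, Set.Ioo (g₂ k) (h₂ k) ⊆ Set.Icc lo₂ hi₂)
    (hdisj₁ : Pairwise (Function.onFun Disjoint fun k => Set.Ioo (g₁ k) (h₁ k)))
    (hdisj₂ : Pairwise (Function.onFun Disjoint fun k => Set.Ioo (g₂ k) (h₂ k)))
    (hthick₁ : ThickAtLeast lo₁ hi₁ g₁ h₁ 1) (hthick₂ : ThickAtLeast lo₂ hi₂ g₂ h₂ 1)
    (hratio₁ : 1 / 3 ≤ (hi₁ - lo₁) / (hi₂ - lo₂))
    (hratio₂ : (hi₁ - lo₁) / (hi₂ - lo₂) ≤ 3) :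
    gapCantorSet lo₁ hi₁ g₁ h₁ + gapCantorSet lo₂ hi₂ g₂ h₂ =
      Set.Icc (lo₁ + lo₂) (hi₁ + hi₂) := by
  apply Set.Subset.antisymm
  · intro z hz
    rw [Set.mem_add] at hz
    obtain ⟨x, hx, y, hy, hxy⟩ := hz
    subst hxy
    exact Set.mem_Icc.2 ⟨add_le_add hx.1.1 hy.1.1, add_le_add hx.1.2 hy.1.2⟩
  · intro t ht
    have htl := (Set.mem_Icc.1 ht).1
    have htr := (Set.mem_Icc.1 ht).2
    set K : ℕ → Set ℝ := fun n =>
      HallAux.stage lo₁ hi₁ g₁ h₁ (Finset.range n) ∩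
        ((fun x => t - x) ⁻¹' HallAux.stage lo₂ hi₂ g₂ h₂ (Finset.range n)) with hK
    have hstage_closed : ∀ (lo hi : ℝ) (g h : ℕ → ℝ) (F : Finset ℕ),
        IsClosed (HallAux.stage lo hi g h F) := fun lo hi g h F =>
      IsClosed.sdiff isClosed_Icc (isOpen_biUnion fun _ _ => isOpen_Ioo)
    have hKclosed : ∀ n, IsClosed (K n) := fun n =>
      (hstage_closed _ _ _ _ _).inter
        ((hstage_closed _ _ _ _ _).preimage (continuous_const.sub continuous_id))
    have hKne : ∀ n, (K n).Nonempty := by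
      intro n
      obtain ⟨x, h1, h2⟩ := HallAux.stage_pair_nonempty lo₁ hi₁ lo₂ hi₂ g₁ h₁ g₂ h₂
        hI₁ hI₂ hsub₁ hsub₂ hdisj₁ hdisj₂ hthick₁ hthick₂ hratio₁ hratio₂ t htl htr n
      exact ⟨x, h1, h2⟩
    have hKmono : ∀ n, K (n + 1) ⊆ K n := by
      intro n
      apply Set.inter_subset_inter
      · exact HallAux.stage_anti (Finset.range_subset_range.2 (Nat.le_succ n))
      · exact fun x hx => HallAux.stage_anti (Finset.range_subset_range.2 (Nat.le_succ n)) hx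
    have hK0 : IsCompact (K 0) :=
      IsCompact.of_isClosed_subset isCompact_Icc (hKclosed 0) (fun x hx => hx.1.1)
    obtain ⟨x, hx⟩ := IsCompact.nonempty_iInter_of_sequence_nonempty_isCompact_isClosed
      K hKmono hKne hK0 hKclosed
    rw [Set.mem_iInter] at hx
    have hx₁ : x ∈ gapCantorSet lo₁ hi₁ g₁ h₁ := by
      refine ⟨(hx 0).1.1, ?_⟩
      intro hmem
      rw [Set.mem_iUnion] at hmem
      obtain ⟨k, hk⟩ := hmem
      exact (HallAux.mem_stage.1 (hx (k + 1)).1).2 k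
        (Finset.mem_range.2 (Nat.lt_succ_self k)) hk
    have hx₂ : t - x ∈ gapCantorSet lo₂ hi₂ g₂ h₂ := by
      refine ⟨(hx 0).2.1, ?_⟩
      intro hmem
      rw [Set.mem_iUnion] at hmem
      obtain ⟨k, hk⟩ := hmem
      exact (HallAux.mem_stage.1 (hx (k + 1)).2).2 k
        (Finset.mem_range.2 (Nat.lt_succ_self k)) hk
    have hsum := Set.add_mem_add hx₁ hx₂
    have he : x + (t - x) = t := by ring
    rwa [he] at hsum
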